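/- Let M be a compact metric space, f: M → M a homeomorphism preserving an ergodic Borel probability measure μ, X a real Banach space, and A: M → GL(X) continuous with respect to d, with cocycle 𝒜. Suppose λ₊(𝒜,μ) = λ₋(𝒜,μ) = 0. Then for every θ > 0 and μ-a.e. x ∈ M there exists N ≥ 1 such that for all k ≥ 1: ∏_{j=0}^{k−1} ‖𝒜_{f^{jN}x}^{N}‖·‖(𝒜_{f^{jN}x}^{N})⁻¹‖ ≤ e^{kNθ} and ∏_{j=0}^{k−1} ‖𝒜_{f^{−jN}x}^{−N}‖·‖(𝒜_{f^{−jN}x}^{−N})⁻¹‖ ≤ e^{kNθ}. -/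

import Mathlib

open MeasureTheory Filter Topology

section GLspace

variable {X : Type*} [NormedAddCommGroup X] [NormedSpace ℝ X]

/-- The metric `d(A,B) = ‖A − B‖ + ‖A⁻¹ − B⁻¹‖` on the group `GL(X)` of invertible bounded
linear operators on `X` (formalized as continuous linear equivalences `X ≃L[ℝ] X`). -/
noncomputable instance glMetricSpace : MetricSpace (X ≃L[ℝ] X) where
  dist A B := ‖(A : X →L[ℝ] X) - (B : X →L[ℝ] X)‖ +
    ‖(A.symm : X →L[ℝ] X) - (B.symm : X →L[ℝ] X)‖
  dist_self A := by simp
  dist_comm A B := by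
    simp only [norm_sub_rev ((A : X →L[ℝ] X)), norm_sub_rev ((A.symm : X →L[ℝ] X))]
  dist_triangle A B C := by
    have h1 : ‖(A : X →L[ℝ] X) - (C : X →L[ℝ] X)‖ ≤
        ‖(A : X →L[ℝ] X) - (B : X →L[ℝ] X)‖ + ‖(B : X →L[ℝ] X) - (C : X →L[ℝ] X)‖ :=
      norm_sub_le_norm_sub_add_norm_sub _ _ _
    have h2 : ‖(A.symm : X →L[ℝ] X) - (C.symm : X →L[ℝ] X)‖ ≤
        ‖(A.symm : X →L[ℝ] X) - (B.symm : X →L[ℝ] X)‖ +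
        ‖(B.symm : X →L[ℝ] X) - (C.symm : X →L[ℝ] X)‖ :=
      norm_sub_le_norm_sub_add_norm_sub _ _ _
    try dsimp only
    linarith
  eq_of_dist_eq_zero := by
    intro A B h
    try dsimp only at h
    have h1 : ‖(A : X →L[ℝ] X) - (B : X →L[ℝ] X)‖ = 0 := by
      have := norm_nonneg ((A : X →L[ℝ] X) - (B : X →L[ℝ] X))
      have := norm_nonneg ((A.symm : X →L[ℝ] X) - (B.symm : X →L[ℝ] X))
      linarith
    have h2 : (A : X →L[ℝ] X) = (B : X →L[ℝ] X) := by
      rwa [norm_eq_zero, sub_eq_zero] at h1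
    exact ContinuousLinearEquiv.coe_injective h2

/-- The Borel σ-algebra of `(GL(X), d)`. -/
noncomputable instance : MeasurableSpace (X ≃L[ℝ] X) := borel _
instance : BorelSpace (X ≃L[ℝ] X) := ⟨rfl⟩

end GLspace

variable {M : Type*} {X : Type*} [NormedAddCommGroup X] [NormedSpace ℝ X]

/-- The cocycle generated by `A` over `f`: `𝒜ₓⁿ = A(f^{n-1}x) ∘ ⋯ ∘ A(fx) ∘ A(x)` for `n ≥ 1`
and `𝒜ₓ⁰ = Id`. -/
def coc (f : M → M) (A : M → (X ≃L[ℝ] X)) : ℕ → M → (X ≃L[ℝ] X)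
  | 0, _ => 1
  | n + 1, x => coc f A n (f x) * A x

/-- The two-sided cocycle over a homeomorphism: `𝒜ₓⁿ` for `n ≥ 0` and
`𝒜ₓ^{-n} = (𝒜_{f^{-n}x}^{n})⁻¹` for `n ≥ 1`. -/
noncomputable def cocZ [TopologicalSpace M] (f : M ≃ₜ M) (A : M → (X ≃L[ℝ] X)) :
    ℤ → M → (X ≃L[ℝ] X)
  | (n : ℕ), x => coc f A n x
  | (Int.negSucc n), x => (coc f A (n + 1) (f.symm^[n + 1] x))⁻¹

section Maximal
variable {α : Type*} [MeasurableSpace α] {μ : Measure α} {T : α → α} {g : α → ℝ}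

/-- `maxSum T g n x = max (0, S₁ g x, …, Sₙ g x)` defined by recursion. -/
def maxSum (T : α → α) (g : α → ℝ) : ℕ → α → ℝ
  | 0, _ => 0
  | n + 1, x => max 0 (g x + maxSum T g n (T x))

lemma maxSum_nonneg (n : ℕ) (x : α) : 0 ≤ maxSum T g n x := by
  cases n with
  | zero => simp [maxSum]
  | succ n => exact le_max_left _ _

lemma maxSum_le_succ (n : ℕ) (x : α) : maxSum T g n x ≤ maxSum T g (n + 1) x := by
  induction n generalizing x with
  | zero => exact maxSum_nonneg 1 x
  | succ n ih =>
    show max 0 (g x + maxSum T g n (T x)) ≤ max 0 (g x + maxSum T g (n+1) (T x))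
    exact max_le_max le_rfl (by linarith [ih (T x)])

lemma maxSum_mono {m n : ℕ} (h : m ≤ n) (x : α) : maxSum T g m x ≤ maxSum T g n x := by
  induction n with
  | zero => simpa [Nat.le_zero.mp h] using le_rfl
  | succ n ih =>
    rcases Nat.lt_or_ge m (n+1) with h' | h'
    · exact (ih (Nat.lt_succ_iff.mp h')).trans (maxSum_le_succ n x)
    · have : m = n + 1 := le_antisymm h h'
      simp [this]

lemma birkhoffSum_le_maxSum (k : ℕ) (x : α) : birkhoffSum T g k x ≤ maxSum T g k x := by
  induction k generalizing x with
  | zero => simp [birkhoffSum_zero, maxSum]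
  | succ k ih =>
    rw [birkhoffSum_succ']
    exact le_trans (by linarith [ih (T x)]) (le_max_right 0 _)

lemma measurable_maxSum (hT : Measurable T) (hg : Measurable g) (n : ℕ) :
    Measurable (maxSum T g n) := by
  induction n with
  | zero => exact measurable_const
  | succ n ih => exact measurable_const.max (hg.add (ih.comp hT))

lemma measurable_birkhoffSum (hT : Measurable T) (hg : Measurable g) (k : ℕ) :
    Measurable (birkhoffSum T g k) := by
  unfold birkhoffSum
  exact Finset.measurable_sum _ fun i _ => hg.comp (hT.iterate i)

lemma integrable_maxSum [IsFiniteMeasure μ] (hT : MeasurePreserving T μ μ)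
    (hgm : Measurable g) (hgi : Integrable g μ) (n : ℕ) :
    Integrable (maxSum T g n) μ := by
  induction n with
  | zero => exact (integrable_const 0).congr (by simp [maxSum])
  | succ n ih =>
    have hcomp : Integrable (fun x => maxSum T g n (T x)) μ :=
      (hT.integrable_comp (measurable_maxSum hT.measurable hgm n).aestronglyMeasurable).mpr ih
    have := (integrable_const (0:ℝ)).sup (hgi.add hcomp)
    exact this.congr (Filter.Eventually.of_forall fun x => rfl)

lemma integral_comp_eq [IsFiniteMeasure μ] (hT : MeasurePreserving T μ μ) {h : α → ℝ}
    (hm : Measurable h) : ∫ x, h (T x) ∂μ = ∫ x, h x ∂μ := by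
  conv_rhs => rw [← hT.map_eq]
  rw [integral_map hT.measurable.aemeasurable
    (hT.map_eq.symm ▸ hm.aestronglyMeasurable : AEStronglyMeasurable h (Measure.map T μ))]

/-- Garsia's maximal ergodic lemma. -/
lemma garsia [IsFiniteMeasure μ] (hT : MeasurePreserving T μ μ)
    (hgm : Measurable g) (hgi : Integrable g μ) (n : ℕ) :
    0 ≤ ∫ x in {x | 0 < maxSum T g (n + 1) x}, g x ∂μ := by
  set E := {x | 0 < maxSum T g (n + 1) x} with hE_def
  have hE : MeasurableSet E :=
    measurableSet_lt measurable_const (measurable_maxSum hT.measurable hgm (n+1))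
  set h : α → ℝ := fun x => maxSum T g (n + 1) x - maxSum T g n (T x) with hh_def
  have honE : ∀ x ∈ E, h x = g x := by
    intro x hx
    have hx' : 0 < max 0 (g x + maxSum T g n (T x)) := hx
    have h1 : 0 < g x + maxSum T g n (T x) := by
      rcases lt_max_iff.mp hx' with h | h
      · exact absurd h (lt_irrefl 0)
      · exact h
    have : maxSum T g (n+1) x = g x + maxSum T g n (T x) := max_eq_right h1.le
    simp [hh_def, this]
  have hoffE : ∀ x ∉ E, h x ≤ 0 := by
    intro x hx
    have h0 : maxSum T g (n+1) x ≤ 0 := not_lt.mp hx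
    have h1 : 0 ≤ maxSum T g n (T x) := maxSum_nonneg n (T x)
    simp only [hh_def]
    linarith
  have hcompInt : Integrable (fun x => maxSum T g n (T x)) μ :=
    (hT.integrable_comp (measurable_maxSum hT.measurable hgm n).aestronglyMeasurable).mpr
      (integrable_maxSum hT hgm hgi n)
  have hhi : Integrable h μ := (integrable_maxSum hT hgm hgi (n+1)).sub hcompInt
  have hIntH : 0 ≤ ∫ x, h x ∂μ := by
    have : ∫ x, h x ∂μ = (∫ x, maxSum T g (n+1) x ∂μ) - ∫ x, maxSum T g n (T x) ∂μ :=
      integral_sub (integrable_maxSum hT hgm hgi (n+1)) hcompInt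
    rw [this, integral_comp_eq hT (measurable_maxSum hT.measurable hgm n)]
    have := integral_mono (integrable_maxSum hT hgm hgi n)
      (integrable_maxSum hT hgm hgi (n+1)) (fun x => maxSum_le_succ n x)
    linarith
  have hsplit : ∫ x, h x ∂μ = (∫ x in E, h x ∂μ) + ∫ x in Eᶜ, h x ∂μ :=
    (integral_add_compl hE hhi).symm
  have hcompl : ∫ x in Eᶜ, h x ∂μ ≤ 0 :=
    setIntegral_nonpos hE.compl fun x hx => hoffE x hx
  have hEeq : ∫ x in E, h x ∂μ = ∫ x in E, g x ∂μ :=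
    setIntegral_congr_fun hE fun x hx => honE x hx
  linarith

/-- Quantitative maximal inequality. -/
lemma maximal_bound [IsFiniteMeasure μ] (hT : MeasurePreserving T μ μ)
    {φ : α → ℝ} (hφm : Measurable φ) (hφi : Integrable φ μ) (hφ0 : ∀ x, 0 ≤ φ x)
    {c : ℝ} (hc : 0 < c) :
    μ {x | ∃ k : ℕ, 1 ≤ k ∧ (k : ℝ) * c < birkhoffSum T φ k x} ≤
      ENNReal.ofReal ((∫ x, φ x ∂μ) / c) := by
  set g : α → ℝ := fun x => φ x - c with hg_def
  have hgm : Measurable g := hφm.sub measurable_const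
  have hgi : Integrable g μ := hφi.sub (integrable_const c)
  have hInonneg : 0 ≤ (∫ x, φ x ∂μ) / c :=
    div_nonneg (integral_nonneg hφ0) hc.le
  have hstep : ∀ m : ℕ, μ {x | 0 < maxSum T g m x} ≤ ENNReal.ofReal ((∫ x, φ x ∂μ) / c) := by
    intro m
    cases m with
    | zero => simp [maxSum]
    | succ n =>
      set E := {x | 0 < maxSum T g (n+1) x} with hE_def
      have hE : MeasurableSet E :=
        measurableSet_lt measurable_const (measurable_maxSum hT.measurable hgm (n+1))
      have h0 : 0 ≤ ∫ x in E, g x ∂μ := garsia hT hgm hgi n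
      have h1 : ∫ x in E, g x ∂μ = (∫ x in E, φ x ∂μ) - (μ E).toReal * c := by
        rw [hg_def]
        rw [integral_sub (hφi.restrict) (integrable_const c)]
        simp [setIntegral_const, smul_eq_mul, measureReal_def]
      have h2 : ∫ x in E, φ x ∂μ ≤ ∫ x, φ x ∂μ :=
        setIntegral_le_integral hφi (Filter.Eventually.of_forall hφ0)
      have h3 : (μ E).toReal ≤ (∫ x, φ x ∂μ) / c := by
        rw [le_div_iff₀ hc]
        linarith
      exact (ENNReal.le_ofReal_iff_toReal_le (measure_ne_top μ E) hInonneg).mpr h3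
  have hsub : {x | ∃ k : ℕ, 1 ≤ k ∧ (k : ℝ) * c < birkhoffSum T φ k x} ⊆
      ⋃ m, {x | 0 < maxSum T g m x} := by
    intro x hx
    obtain ⟨k, _hk, hlt⟩ := hx
    have hsum : birkhoffSum T g k x = birkhoffSum T φ k x - k * c := by
      simp [hg_def, birkhoffSum, Finset.sum_sub_distrib]
    have : 0 < birkhoffSum T g k x := by rw [hsum]; linarith
    exact Set.mem_iUnion.mpr ⟨k, lt_of_lt_of_le this (birkhoffSum_le_maxSum k x)⟩
  have hmono : Directed (· ⊆ ·) (fun m => {x | 0 < maxSum T g m x}) := by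
    refine (Monotone.directed_le ?_)
    intro m n hmn x hx
    exact lt_of_lt_of_le hx (maxSum_mono hmn x)
  calc μ {x | ∃ k : ℕ, 1 ≤ k ∧ (k : ℝ) * c < birkhoffSum T φ k x}
      ≤ μ (⋃ m, {x | 0 < maxSum T g m x}) := measure_mono hsub
    _ = ⨆ m, μ {x | 0 < maxSum T g m x} := hmono.measure_iUnion
    _ ≤ ENNReal.ofReal ((∫ x, φ x ∂μ) / c) := iSup_le hstep

end Maximal

section GLhelp

variable {X : Type*} [NormedAddCommGroup X] [NormedSpace ℝ X]

lemma gl_dist_eq (A B : X ≃L[ℝ] X) :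
    dist A B = ‖(A : X →L[ℝ] X) - (B : X →L[ℝ] X)‖ +
      ‖(A.symm : X →L[ℝ] X) - (B.symm : X →L[ℝ] X)‖ := rfl

lemma gl_inv_coe (B : X ≃L[ℝ] X) :
    ((B⁻¹ : X ≃L[ℝ] X) : X →L[ℝ] X) = (B.symm : X →L[ℝ] X) := rfl

lemma gl_mul_coe (A B : X ≃L[ℝ] X) :
    ((A * B : X ≃L[ℝ] X) : X →L[ℝ] X) = (A : X →L[ℝ] X).comp (B : X →L[ℝ] X) := by
  ext x; rfl

lemma gl_mul_symm_coe (A B : X ≃L[ℝ] X) :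
    (((A * B : X ≃L[ℝ] X)).symm : X →L[ℝ] X) =
      (B.symm : X →L[ℝ] X).comp (A.symm : X →L[ℝ] X) := by
  ext x; rfl

lemma gl_continuous_coe : Continuous fun A : X ≃L[ℝ] X => (A : X →L[ℝ] X) := by
  refine (LipschitzWith.of_dist_le_mul (K := 1) fun A B => ?_).continuous
  rw [dist_eq_norm, NNReal.coe_one, one_mul, gl_dist_eq]
  exact le_add_of_nonneg_right (norm_nonneg _)

lemma gl_continuous_symm_coe : Continuous fun A : X ≃L[ℝ] X => (A.symm : X →L[ℝ] X) := by
  refine (LipschitzWith.of_dist_le_mul (K := 1) fun A B => ?_).continuous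
  rw [dist_eq_norm, NNReal.coe_one, one_mul, gl_dist_eq]
  exact le_add_of_nonneg_left (norm_nonneg _)

lemma gl_continuous_of {Y : Type*} [TopologicalSpace Y] {g : Y → X ≃L[ℝ] X}
    (h1 : Continuous fun y => ((g y : X →L[ℝ] X)))
    (h2 : Continuous fun y => (((g y).symm : X →L[ℝ] X))) : Continuous g := by
  rw [continuous_iff_continuousAt]
  intro b
  rw [ContinuousAt, tendsto_iff_dist_tendsto_zero]
  have key : (fun y => dist (g y) (g b)) = fun y =>
      dist ((g y : X →L[ℝ] X)) ((g b : X →L[ℝ] X)) +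
      dist (((g y).symm : X →L[ℝ] X)) (((g b).symm : X →L[ℝ] X)) := by
    funext y
    rw [gl_dist_eq, dist_eq_norm, dist_eq_norm]
  rw [key]
  have t1 := tendsto_iff_dist_tendsto_zero.mp (h1.continuousAt (x := b))
  have t2 := tendsto_iff_dist_tendsto_zero.mp (h2.continuousAt (x := b))
  simpa using t1.add t2

variable {M : Type*}

lemma continuous_coc [TopologicalSpace M] {f : M → M} (hf : Continuous f)
    {A : M → (X ≃L[ℝ] X)} (hA : Continuous A) (n : ℕ) : Continuous (coc f A n) := by
  induction n with
  | zero => exact continuous_const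
  | succ n ih =>
    apply gl_continuous_of
    · have : (fun x => ((coc f A (n+1) x : X ≃L[ℝ] X) : X →L[ℝ] X)) = fun x =>
          ((coc f A n (f x) : X →L[ℝ] X)).comp ((A x : X →L[ℝ] X)) := by
        funext x; rw [show coc f A (n+1) x = coc f A n (f x) * A x from rfl, gl_mul_coe]
      rw [this]
      exact (gl_continuous_coe.comp (ih.comp hf)).clm_comp (gl_continuous_coe.comp hA)
    · have : (fun x => (((coc f A (n+1) x).symm : X →L[ℝ] X))) = fun x =>
          (((A x).symm : X →L[ℝ] X)).comp (((coc f A n (f x)).symm : X →L[ℝ] X)) := by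
        funext x; rw [show coc f A (n+1) x = coc f A n (f x) * A x from rfl, gl_mul_symm_coe]
      rw [this]
      exact (gl_continuous_symm_coe.comp hA).clm_comp
        (gl_continuous_symm_coe.comp (ih.comp hf))

lemma gl_one_le [Nontrivial X] [CompleteSpace X] (B : X ≃L[ℝ] X) :
    1 ≤ ‖(B.symm : X →L[ℝ] X)‖ * ‖(B : X →L[ℝ] X)‖ := by
  have hcomp : (B.symm : X →L[ℝ] X).comp (B : X →L[ℝ] X) = ContinuousLinearMap.id ℝ X := by
    ext x; simp
  calc (1 : ℝ) = ‖ContinuousLinearMap.id ℝ X‖ := (ContinuousLinearMap.norm_id).symm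
    _ = ‖(B.symm : X →L[ℝ] X).comp (B : X →L[ℝ] X)‖ := by rw [hcomp]
    _ ≤ ‖(B.symm : X →L[ℝ] X)‖ * ‖(B : X →L[ℝ] X)‖ := ContinuousLinearMap.opNorm_comp_le _ _

lemma gl_norm_pos [Nontrivial X] [CompleteSpace X] (B : X ≃L[ℝ] X) :
    0 < ‖(B : X →L[ℝ] X)‖ := by
  have h := gl_one_le B
  have h1 : 0 ≤ ‖(B.symm : X →L[ℝ] X)‖ := norm_nonneg _
  have h2 : 0 ≤ ‖(B : X →L[ℝ] X)‖ := norm_nonneg _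
  nlinarith

lemma gl_norm_symm_pos [Nontrivial X] [CompleteSpace X] (B : X ≃L[ℝ] X) :
    0 < ‖(B.symm : X →L[ℝ] X)‖ := by
  have h := gl_one_le B
  have h2 : 0 ≤ ‖(B : X →L[ℝ] X)‖ := norm_nonneg _
  have h1 : 0 ≤ ‖(B.symm : X →L[ℝ] X)‖ := norm_nonneg _
  nlinarith

lemma cocZ_neg_coe [TopologicalSpace M] (f : M ≃ₜ M) (A : M → (X ≃L[ℝ] X)) (m : ℕ) (y : M) :
    cocZ f A (-((m + 1 : ℕ) : ℤ)) y = (coc f A (m + 1) ((⇑f.symm)^[m + 1] y))⁻¹ := by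
  have h : (-((m + 1 : ℕ) : ℤ)) = Int.negSucc m := by
    simp [Int.negSucc_eq]
  rw [h]
  rfl

end GLhelp

/-- If both Lyapunov exponents of the cocycle vanish, then for every `θ > 0`
and `μ`-a.e. `x` there is `N ≥ 1` with
`∏_{j<k} ‖𝒜_{f^{jN}x}^N‖·‖(𝒜_{f^{jN}x}^N)⁻¹‖ ≤ e^{kNθ}` and
`∏_{j<k} ‖𝒜_{f^{−jN}x}^{−N}‖·‖(𝒜_{f^{−jN}x}^{−N})⁻¹‖ ≤ e^{kNθ}` for all `k ≥ 1`. -/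
theorem stmt14 {M : Type*} [MetricSpace M] [CompactSpace M] [MeasurableSpace M] [BorelSpace M]
    {X : Type*} [NormedAddCommGroup X] [NormedSpace ℝ X] [CompleteSpace X]
    (f : M ≃ₜ M) (μ : Measure M) [IsProbabilityMeasure μ] (herg : Ergodic f μ)
    (A : M → (X ≃L[ℝ] X)) (hA : Continuous A)
    (hlamP : Tendsto (fun n : ℕ =>
      (n : ℝ)⁻¹ * ∫ x, Real.log ‖(coc f A n x : X →L[ℝ] X)‖ ∂μ) atTop (𝓝 0))
    (hlamM : Tendsto (fun n : ℕ =>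
      (n : ℝ)⁻¹ * ∫ x, Real.log ‖(((coc f A n x)⁻¹ : X ≃L[ℝ] X) : X →L[ℝ] X)‖ ∂μ)
      atTop (𝓝 0)) :
    ∀ θ : ℝ, 0 < θ → ∀ᵐ x ∂μ, ∃ N : ℕ, 1 ≤ N ∧ ∀ k : ℕ, 1 ≤ k →
      (∏ j ∈ Finset.range k,
          (‖(coc f A N (f^[j * N] x) : X →L[ℝ] X)‖ *
            ‖(((coc f A N (f^[j * N] x))⁻¹ : X ≃L[ℝ] X) : X →L[ℝ] X)‖) ≤
        Real.exp ((k : ℝ) * (N : ℝ) * θ)) ∧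
      (∏ j ∈ Finset.range k,
          (‖(cocZ f A (-(N : ℤ)) (f.symm^[j * N] x) : X →L[ℝ] X)‖ *
            ‖(((cocZ f A (-(N : ℤ)) (f.symm^[j * N] x))⁻¹ : X ≃L[ℝ] X) : X →L[ℝ] X)‖) ≤
        Real.exp ((k : ℝ) * (N : ℝ) * θ)) := by
  intro θ hθ
  rcases subsingleton_or_nontrivial X with hX | hX
  · -- trivial case: all operator norms vanish
    refine Filter.Eventually.of_forall fun x => ⟨1, le_rfl, fun k hk => ?_⟩
    have hz : ∀ B : X →L[ℝ] X, ‖B‖ = 0 := fun B => by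
      have : B = 0 := Subsingleton.elim _ _
      simp [this]
    constructor <;>
    · refine le_trans (le_of_eq (Finset.prod_eq_zero
        (Finset.mem_range.mpr (by omega : 0 < k)) ?_)) (Real.exp_pos _).le
      simp [hz]
  -- main case
  have hf : Continuous (⇑f) := f.continuous
  have hfm : MeasurePreserving (⇑f) μ μ := herg.toMeasurePreserving
  have hsymm : MeasurePreserving (⇑f.symm) μ μ := by
    refine ⟨f.symm.continuous.measurable, ?_⟩
    conv_lhs => rw [← hfm.map_eq]
    rw [Measure.map_map f.symm.continuous.measurable hf.measurable]
    have hco : (⇑f.symm) ∘ (⇑f) = id := funext fun x => f.symm_apply_apply x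
    rw [hco, Measure.map_id]
  set φ : ℕ → M → ℝ := fun N x =>
    Real.log ‖(coc (⇑f) A N x : X →L[ℝ] X)‖ +
    Real.log ‖(((coc (⇑f) A N x)⁻¹ : X ≃L[ℝ] X) : X →L[ℝ] X)‖ with hφdef
  have hcoc : ∀ N, Continuous (coc (⇑f) A N) := fun N => continuous_coc hf hA N
  have hl1 : ∀ N, Continuous fun x => Real.log ‖(coc (⇑f) A N x : X →L[ℝ] X)‖ := by
    intro N
    exact ((gl_continuous_coe.comp (hcoc N)).norm).log fun x => (gl_norm_pos _).ne'
  have hl2 : ∀ N, Continuous fun x =>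
      Real.log ‖(((coc (⇑f) A N x)⁻¹ : X ≃L[ℝ] X) : X →L[ℝ] X)‖ := by
    intro N
    exact ((gl_continuous_symm_coe.comp (hcoc N)).norm).log fun x => (gl_norm_symm_pos _).ne'
  have hφcont : ∀ N, Continuous (φ N) := fun N => (hl1 N).add (hl2 N)
  have hφm : ∀ N, Measurable (φ N) := fun N => (hφcont N).measurable
  have hint : ∀ g : M → ℝ, Continuous g → Integrable g μ := by
    intro g hg
    have h1 : IntegrableOn g Set.univ μ :=
      hg.continuousOn.integrableOn_compact' isCompact_univ MeasurableSet.univ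
    rwa [integrableOn_univ] at h1
  have hφi : ∀ N, Integrable (φ N) μ := fun N => hint _ (hφcont N)
  have hφ0 : ∀ N x, 0 ≤ φ N x := by
    intro N x
    have hab := gl_one_le (coc (⇑f) A N x)
    have ha := gl_norm_pos (coc (⇑f) A N x)
    have hb := gl_norm_symm_pos (coc (⇑f) A N x)
    have hlog := Real.log_nonneg hab
    rw [Real.log_mul hb.ne' ha.ne'] at hlog
    have : φ N x = Real.log ‖(coc (⇑f) A N x : X →L[ℝ] X)‖ +
        Real.log ‖((coc (⇑f) A N x).symm : X →L[ℝ] X)‖ := rfl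
    rw [this]
    linarith
  -- integral average tends to zero
  have hIten : Tendsto (fun N : ℕ => (N : ℝ)⁻¹ * ∫ x, φ N x ∂μ) atTop (𝓝 0) := by
    have hsplit : ∀ N : ℕ, ∫ x, φ N x ∂μ =
        (∫ x, Real.log ‖(coc (⇑f) A N x : X →L[ℝ] X)‖ ∂μ) +
        ∫ x, Real.log ‖(((coc (⇑f) A N x)⁻¹ : X ≃L[ℝ] X) : X →L[ℝ] X)‖ ∂μ := fun N =>
      integral_add (hint _ (hl1 N)) (hint _ (hl2 N))
    have heq : (fun N : ℕ => (N : ℝ)⁻¹ * ∫ x, φ N x ∂μ) = fun N : ℕ =>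
        ((N : ℝ)⁻¹ * ∫ x, Real.log ‖(coc (⇑f) A N x : X →L[ℝ] X)‖ ∂μ) +
        ((N : ℝ)⁻¹ * ∫ x, Real.log ‖(((coc (⇑f) A N x)⁻¹ : X ≃L[ℝ] X) : X →L[ℝ] X)‖ ∂μ) :=
      funext fun N => by rw [hsplit, mul_add]
    rw [heq]
    simpa using hlamP.add hlamM
  -- the good properties
  set GF : ℕ → M → Prop := fun N x => ∀ k : ℕ, 1 ≤ k →
    birkhoffSum ((⇑f)^[N]) (φ N) k x ≤ (k : ℝ) * ((N : ℝ) * θ) with hGFdef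
  set GB : ℕ → M → Prop := fun N x => ∀ k : ℕ, 1 ≤ k →
    birkhoffSum ((⇑f.symm)^[N]) (φ N) k ((⇑f.symm)^[N] x) ≤ (k : ℝ) * ((N : ℝ) * θ) with hGBdef
  have hmain : ∀ᵐ x ∂μ, ∃ N : ℕ, 1 ≤ N ∧ GF N x ∧ GB N x := by
    rw [ae_iff]
    set b : ℕ → ℝ := fun N => (∫ x, φ N x ∂μ) / ((N : ℝ) * θ) with hbdef
    have hcN : ∀ N : ℕ, 1 ≤ N → 0 < (N : ℝ) * θ := fun N hN =>
      mul_pos (by exact_mod_cast hN) hθ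
    have hEF : ∀ N : ℕ, 1 ≤ N → μ {x | ¬ GF N x} ≤ ENNReal.ofReal (b N) := by
      intro N hN
      have hset : {x | ¬ GF N x} = {x | ∃ k : ℕ, 1 ≤ k ∧
          (k : ℝ) * ((N : ℝ) * θ) < birkhoffSum ((⇑f)^[N]) (φ N) k x} := by
        ext x
        simp [hGFdef, not_forall, not_le]
      rw [hset]
      exact maximal_bound (hfm.iterate N) (hφm N) (hφi N) (hφ0 N) (hcN N hN)
    have hEB : ∀ N : ℕ, 1 ≤ N → μ {x | ¬ GB N x} ≤ ENNReal.ofReal (b N) := by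
      intro N hN
      have hset : {x | ¬ GB N x} = ((⇑f.symm)^[N]) ⁻¹' {z | ∃ k : ℕ, 1 ≤ k ∧
          (k : ℝ) * ((N : ℝ) * θ) < birkhoffSum ((⇑f.symm)^[N]) (φ N) k z} := by
        ext x
        simp [hGBdef, not_forall, not_le, Set.mem_preimage]
      have hmeas : MeasurableSet {z | ∃ k : ℕ, 1 ≤ k ∧
          (k : ℝ) * ((N : ℝ) * θ) < birkhoffSum ((⇑f.symm)^[N]) (φ N) k z} := by
        have : {z | ∃ k : ℕ, 1 ≤ k ∧
            (k : ℝ) * ((N : ℝ) * θ) < birkhoffSum ((⇑f.symm)^[N]) (φ N) k z} =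
            ⋃ k : ℕ, {z | ((k + 1 : ℕ) : ℝ) * ((N : ℝ) * θ) <
              birkhoffSum ((⇑f.symm)^[N]) (φ N) (k + 1) z} := by
          ext z
          constructor
          · rintro ⟨k, hk, h⟩
            refine Set.mem_iUnion.mpr ⟨k - 1, ?_⟩
            have hk1 : k - 1 + 1 = k := Nat.succ_pred_eq_of_pos hk
            simpa [hk1] using h
          · intro hz
            obtain ⟨k, h⟩ := Set.mem_iUnion.mp hz
            exact ⟨k + 1, by omega, h⟩
        rw [this]
        exact MeasurableSet.iUnion fun k => measurableSet_lt measurable_const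
          (measurable_birkhoffSum (hsymm.iterate N).measurable (hφm N) (k + 1))
      rw [hset, (hsymm.iterate N).measure_preimage hmeas.nullMeasurableSet]
      exact maximal_bound (hsymm.iterate N) (hφm N) (hφi N) (hφ0 N) (hcN N hN)
    have hsub : {x | ¬ ∃ N : ℕ, 1 ≤ N ∧ GF N x ∧ GB N x} ⊆
        ⋂ N : ℕ, ({x | ¬ GF (N + 1) x} ∪ {x | ¬ GB (N + 1) x}) := by
      intro x hx
      refine Set.mem_iInter.mpr fun N => ?_
      by_contra hmem
      rw [Set.mem_union] at hmem
      push_neg at hmem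
      simp only [Set.mem_setOf_eq, not_not] at hmem
      exact hx ⟨N + 1, by omega, hmem.1, hmem.2⟩
    have hBadle : ∀ N : ℕ, μ {x | ¬ ∃ N : ℕ, 1 ≤ N ∧ GF N x ∧ GB N x} ≤
        ENNReal.ofReal (b (N + 1)) + ENNReal.ofReal (b (N + 1)) := by
      intro N
      refine le_trans (measure_mono hsub) ?_
      refine le_trans (measure_mono (Set.iInter_subset _ N)) ?_
      refine le_trans (measure_union_le _ _) ?_
      exact add_le_add (hEF (N + 1) (by omega)) (hEB (N + 1) (by omega))
    have hb : Tendsto b atTop (𝓝 0) := by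
      have heq : b = fun N : ℕ => ((N : ℝ)⁻¹ * ∫ x, φ N x ∂μ) * θ⁻¹ := by
        funext N
        simp only [hbdef]
        rw [div_eq_mul_inv, mul_inv]
        ring
      rw [heq]
      simpa using hIten.mul_const θ⁻¹
    have hb' : Tendsto (fun N : ℕ => b (N + 1)) atTop (𝓝 0) :=
      hb.comp (tendsto_add_atTop_nat 1)
    have htends : Tendsto (fun N : ℕ => ENNReal.ofReal (b (N + 1)) + ENNReal.ofReal (b (N + 1)))
        atTop (𝓝 0) := by
      have h1 := ENNReal.tendsto_ofReal hb'
      simpa using h1.add h1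
    exact le_antisymm (ge_of_tendsto' htends hBadle) (zero_le)
  -- conclude
  filter_upwards [hmain] with x hx
  obtain ⟨N, hN, hGF, hGB⟩ := hx
  refine ⟨N, hN, fun k hk => ?_⟩
  obtain ⟨m, rfl⟩ : ∃ m, N = m + 1 := ⟨N - 1, by omega⟩
  constructor
  · -- forward
    have hprod : (∏ j ∈ Finset.range k,
        (‖(coc (⇑f) A (m + 1) ((⇑f)^[j * (m + 1)] x) : X →L[ℝ] X)‖ *
          ‖(((coc (⇑f) A (m + 1) ((⇑f)^[j * (m + 1)] x))⁻¹ : X ≃L[ℝ] X) : X →L[ℝ] X)‖)) =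
        Real.exp (birkhoffSum ((⇑f)^[m + 1]) (φ (m + 1)) k x) := by
      rw [show birkhoffSum ((⇑f)^[m + 1]) (φ (m + 1)) k x =
        ∑ j ∈ Finset.range k, φ (m + 1) (((⇑f)^[m + 1])^[j] x) from rfl, Real.exp_sum]
      refine Finset.prod_congr rfl fun j _ => ?_
      have hx1 : (⇑f)^[j * (m + 1)] x = ((⇑f)^[m + 1])^[j] x := by
        rw [mul_comm, Function.iterate_mul]
      rw [hx1]
      simp only [hφdef, gl_inv_coe]
      rw [Real.exp_add, Real.exp_log (gl_norm_pos _), Real.exp_log (gl_norm_symm_pos _)]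
    rw [hprod, Real.exp_le_exp, mul_assoc]
    exact hGF k hk
  · -- backward
    have hprod : (∏ j ∈ Finset.range k,
        (‖(cocZ f A (-((m + 1 : ℕ) : ℤ)) ((⇑f.symm)^[j * (m + 1)] x) : X →L[ℝ] X)‖ *
          ‖(((cocZ f A (-((m + 1 : ℕ) : ℤ)) ((⇑f.symm)^[j * (m + 1)] x))⁻¹ :
              X ≃L[ℝ] X) : X →L[ℝ] X)‖)) =
        Real.exp (birkhoffSum ((⇑f.symm)^[m + 1]) (φ (m + 1)) k ((⇑f.symm)^[m + 1] x)) := by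
      rw [show birkhoffSum ((⇑f.symm)^[m + 1]) (φ (m + 1)) k ((⇑f.symm)^[m + 1] x) =
        ∑ j ∈ Finset.range k, φ (m + 1) (((⇑f.symm)^[m + 1])^[j] ((⇑f.symm)^[m + 1] x)) from rfl,
        Real.exp_sum]
      refine Finset.prod_congr rfl fun j _ => ?_
      rw [cocZ_neg_coe f A m ((⇑f.symm)^[j * (m + 1)] x), inv_inv]
      have hy : (⇑f.symm)^[m + 1] ((⇑f.symm)^[j * (m + 1)] x) =
          ((⇑f.symm)^[m + 1])^[j] ((⇑f.symm)^[m + 1] x) := by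
        rw [← Function.iterate_mul, ← Function.iterate_add_apply, ← Function.iterate_add_apply]
        congr 1
        ring
      rw [hy]
      simp only [hφdef, gl_inv_coe]
      rw [Real.exp_add, Real.exp_log (gl_norm_pos _), Real.exp_log (gl_norm_symm_pos _)]
      ring
    rw [hprod, Real.exp_le_exp, mul_assoc]
    exact hGB k hk
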